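/- Let n₊, μ₊, n₋, μ₋, t be an edge configuration with ⟨n₊,n₋⟩ ≠ −1, let W : ℝ³ → ℝ³ be a linear map, and let a ∈ ℝ³ satisfy the co-normal continuity a = P_{n₋→n₊}(−W(μ₋)). Then P_{n₋→n₊}(W(P_{n₊→n₋}(μ₊))) = a; i.e., the intrinsic jump of W across the edge evaluated in the co-normal direction μ₊ vanishes. -/

import Mathlib

open scoped InnerProductSpace

noncomputable section
open Classical

abbrev E3 : Type := EuclideanSpace ℝ (Fin 3)

/-- Cross product on `E3`. -/
def cross3 (a b : E3) : E3 :=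
  (EuclideanSpace.equiv (Fin 3) ℝ).symm
    (crossProduct ((EuclideanSpace.equiv (Fin 3) ℝ) a) ((EuclideanSpace.equiv (Fin 3) ℝ) b))

/-- Geodesic distance on the unit sphere. -/
def sphDist (n₁ n₂ : E3) : ℝ := Real.arccos ⟪n₁, n₂⟫_ℝ

/-- The logarithmic map of the unit sphere. -/
def sphLog (n₁ n₂ : E3) : E3 :=
  if n₂ = n₁ then 0
  else (Real.arccos ⟪n₁, n₂⟫_ℝ / ‖n₂ - ⟪n₁, n₂⟫_ℝ • n₁‖) • (n₂ - ⟪n₁, n₂⟫_ℝ • n₁)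

/-- Parallel transport along the shortest geodesic of the unit sphere. -/
def ptrans (n₁ n₂ ξ : E3) : E3 :=
  ξ - (⟪ξ, n₂⟫_ℝ / (1 + ⟪n₂, n₁⟫_ℝ)) • (n₂ + n₁)

open Matrix in
/-- BAC-CAB rule. -/
lemma bac_cab (u v w : Fin 3 → ℝ) :
    u ⨯₃ (v ⨯₃ w) = (u ⬝ᵥ w) • v - (u ⬝ᵥ v) • w := by
  ext i
  fin_cases i <;>
    simp [cross_apply, dotProduct, Fin.sum_univ_three] <;> ring

open Matrix in
/-- The key geometric fact: in an edge configuration, parallel transport of `μ₊`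
from `n₊` to `n₋` is `-μ₋`; coordinate version. -/
lemma key (np μp nm μm t : Fin 3 → ℝ)
    (hnp : np ⬝ᵥ np = 1) (hμp : μp ⬝ᵥ μp = 1) (hnm : nm ⬝ᵥ nm = 1) (hμm : μm ⬝ᵥ μm = 1)
    (ht : t ⬝ᵥ t = 1)
    (hcp : np ⨯₃ μp = t) (hcm : nm ⨯₃ μm = -t) :
    μm = (nm ⬝ᵥ μp) • np - (nm ⬝ᵥ np) • μp ∧
      nm = (nm ⬝ᵥ np) • np + (nm ⬝ᵥ μp) • μp := by
  have hcomm : ∀ x y : Fin 3 → ℝ, x ⬝ᵥ y = y ⬝ᵥ x := fun x y => dotProduct_comm x y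
  -- np ⬝ μp = 0
  have h1 : np ⬝ᵥ μp = 0 := by
    have := cross_dot_cross np μp np μp
    rw [hcp, ht, hnp, hμp, hcomm μp np] at this
    nlinarith
  -- nm ⬝ μm = 0
  have h2 : nm ⬝ᵥ μm = 0 := by
    have := cross_dot_cross nm μm nm μm
    rw [hcm, hnm, hμm, hcomm μm nm] at this
    simp only [dotProduct_neg, neg_dotProduct, neg_neg, ht] at this
    nlinarith
  -- μm = nm × t
  have hμmt : μm = nm ⨯₃ t := by
    have h := bac_cab nm nm μm
    rw [h2, hnm, hcm] at h
    have : nm ⨯₃ (-t) = -(nm ⨯₃ t) := by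
      rw [← cross_anticomm, ← cross_anticomm t nm]; simp [LinearMap.map_neg]
    rw [this] at h
    rw [zero_smul, one_smul, zero_sub, neg_inj] at h
    exact h.symm
  -- μm in terms of np, μp
  have hμm_eq : μm = (nm ⬝ᵥ μp) • np - (nm ⬝ᵥ np) • μp := by
    rw [hμmt, ← hcp, bac_cab]
  -- t ⬝ nm = 0
  have htnm : t ⬝ᵥ nm = 0 := by
    have h0 : nm ⬝ᵥ (nm ⨯₃ μm) = 0 := dot_self_cross nm μm
    rw [hcm, dotProduct_neg, neg_eq_zero] at h0
    rw [hcomm]; exact h0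
  -- t × np = μp, t × μp = -np
  have htnp : t ⨯₃ np = μp := by
    have : np ⨯₃ t = -μp := by
      rw [← hcp, bac_cab, h1, hnp]; simp
    rw [← cross_anticomm, this, neg_neg]
  have htμp : t ⨯₃ μp = -np := by
    have : μp ⨯₃ t = np := by
      rw [← hcp, bac_cab, hcomm μp np, h1, hμp]; simp
    rw [← cross_anticomm, this]
  -- nm in terms of np, μp
  have hnm_eq : nm = (nm ⬝ᵥ np) • np + (nm ⬝ᵥ μp) • μp := by
    have h := bac_cab t t nm
    rw [htnm, ht] at h
    have ht2 : t ⨯₃ nm = (nm ⬝ᵥ np) • μp - (nm ⬝ᵥ μp) • np := by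
      have : nm ⨯₃ t = (nm ⬝ᵥ μp) • np - (nm ⬝ᵥ np) • μp := by rw [← hcp, bac_cab]
      rw [← cross_anticomm, this, neg_sub]
    rw [ht2] at h
    have hlin : t ⨯₃ ((nm ⬝ᵥ np) • μp - (nm ⬝ᵥ μp) • np)
        = (nm ⬝ᵥ np) • (t ⨯₃ μp) - (nm ⬝ᵥ μp) • (t ⨯₃ np) := by
      simp [LinearMap.map_sub, LinearMap.map_smul]
    rw [hlin, htμp, htnp] at h
    rw [zero_smul, one_smul, zero_sub] at h
    have h2' : -((nm ⬝ᵥ np) • np + (nm ⬝ᵥ μp) • μp) = -nm := by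
      rw [← h]; module
    exact (neg_inj.mp h2').symm
  exact ⟨hμm_eq, hnm_eq⟩

theorem intrinsic_jump_vanishes_in_co_normal_direction (np μp nm μm t : E3)
    (hnp : ‖np‖ = 1) (hμp : ‖μp‖ = 1) (hnm : ‖nm‖ = 1) (hμm : ‖μm‖ = 1) (ht : ‖t‖ = 1)
    (hcp : cross3 np μp = t) (hcm : cross3 nm μm = -t)
    (hne : ⟪np, nm⟫_ℝ ≠ -1)
    (W : E3 →ₗ[ℝ] E3) (a : E3)
    (hcont : a = ptrans nm np (-(W μm))) :
    ptrans nm np (W (ptrans np nm μp)) = a := by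
  -- pass to coordinates
  have d : (Fin 3 → ℝ) → (Fin 3 → ℝ) → ℝ := dotProduct
  have hinner : ∀ x y : E3, ⟪x, y⟫_ℝ = dotProduct (m := Fin 3) (α := ℝ) x y := by
    intro x y
    simp [PiLp.inner_apply, dotProduct, mul_comm]
  have hdot : ∀ x : E3, ‖x‖ = 1 → dotProduct (m := Fin 3) (α := ℝ) x x = 1 := by
    intro x hx
    rw [← hinner, real_inner_self_eq_norm_sq, hx]; norm_num
  have hcp' : crossProduct (R := ℝ) np μp = t := congrArg WithLp.ofLp hcp
  have hcm' : crossProduct (R := ℝ) nm μm = -t := congrArg WithLp.ofLp hcm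
  obtain ⟨hμm_eq, hnm_eq⟩ := key np μp nm μm t (hdot np hnp) (hdot μp hμp) (hdot nm hnm)
    (hdot μm hμm) (hdot t ht) hcp' hcm'
  set b : ℝ := dotProduct (m := Fin 3) (α := ℝ) nm μp with hb
  set c : ℝ := dotProduct (m := Fin 3) (α := ℝ) nm np with hc
  -- b² + c² = 1
  have hnpμp : dotProduct (m := Fin 3) (α := ℝ) np μp = 0 := by
    have := cross_dot_cross (R := ℝ) np μp np μp
    rw [hcp', hdot t ht, hdot np hnp, hdot μp hμp, dotProduct_comm μp np] at this
    nlinarith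
  have hbc : b ^ 2 + c ^ 2 = 1 := by
    have h := hdot nm hnm
    rw [hnm_eq] at h
    simp only [add_dotProduct, smul_dotProduct, dotProduct_add,
      dotProduct_smul, smul_eq_mul, hdot np hnp, hdot μp hμp, hnpμp,
      dotProduct_comm μp np, hnpμp] at h
    nlinarith
  -- 1 + c ≠ 0
  have h1c : (1 : ℝ) + c ≠ 0 := by
    intro h
    apply hne
    rw [hinner, dotProduct_comm, ← hc]
    linarith
  -- the main transport identity: ptrans np nm μp = -μm
  have hkey : ptrans np nm μp = -μm := by
    unfold ptrans
    have hμpnm : ⟪μp, nm⟫_ℝ = b := by rw [hinner, dotProduct_comm]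
    have hnmnp : ⟪nm, np⟫_ℝ = c := by rw [hinner]
    rw [hμpnm, hnmnp]
    have hnmE : nm = c • np + b • μp := WithLp.ofLp_injective 2 hnm_eq
    have hμmE : μm = b • np - c • μp := WithLp.ofLp_injective 2 hμm_eq
    rw [hnmE, hμmE]
    match_scalars
    · rw [neg_neg, div_mul_eq_mul_div, sub_eq_iff_eq_add]
      field_simp
      linear_combination -hbc
    · rw [div_mul_eq_mul_div]
      field_simp
      ring
  rw [hkey, map_neg, hcont]
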